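/- A lottery p is SD-efficient at a profile R if and only if there is no lottery q and no utility representation such that q u-dominates p for every utility representation u of R; equivalently, an SDS f never returns a lottery that is u-dominated for all utility representations u if and only if for every profile R there is no lottery q with q ≿_i^SD f(R) for all agents i and q ≻_i^SD f(R) for some agent i. -/
import Mathlib


open Classical

noncomputable section

variable {A : Type*} [Fintype A]

/-- A (weak) preference relation: complete and transitive. -/
def IsPref (r : A → A → Prop) : Prop :=
  (∀ x y, r x y ∨ r y x) ∧ ∀ x y z, r x y → r y z → r x z

/-- A lottery over the alternatives. -/
def Lottery (A : Type*) [Fintype A] :=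
  {p : A → ℝ // (∀ x, 0 ≤ p x) ∧ ∑ x, p x = 1}

/-- Probability that lottery `p` yields an alternative at least as good as `x` w.r.t. `r`. -/
def upperSum (r : A → A → Prop) (p : Lottery A) (x : A) : ℝ :=
  ∑ y, if r y x then p.1 y else 0

/-- `p` (weakly) stochastically dominates `q` w.r.t. the preference relation `r`. -/
def SDGe (r : A → A → Prop) (p q : Lottery A) : Prop :=
  ∀ x, upperSum r q x ≤ upperSum r p x

/-- Strict stochastic dominance. -/
def SDGt (r : A → A → Prop) (p q : Lottery A) : Prop :=
  SDGe r p q ∧ ¬ SDGe r q p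

/-- A profile assigning a preference relation to each of `n` agents; validity. -/
def ValidProfile {n : ℕ} (R : Fin n → A → A → Prop) : Prop :=
  ∀ i, IsPref (R i)

/-- `p` is SD-efficient at profile `R`. -/
def SDEfficientAt {n : ℕ} (R : Fin n → A → A → Prop) (p : Lottery A) : Prop :=
  ¬ ∃ q : Lottery A, (∀ i, SDGe (R i) q p) ∧ ∃ i, SDGt (R i) q p

def Anonymous {n : ℕ} (f : (Fin n → A → A → Prop) → Lottery A) : Prop :=
  ∀ R : Fin n → A → A → Prop, ValidProfile R →
    ∀ σ : Equiv.Perm (Fin n), f (R ∘ σ) = f R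

/-- Relabel a preference relation by a permutation of the alternatives. -/
def relabel (π : Equiv.Perm A) (r : A → A → Prop) : A → A → Prop :=
  fun x y => r (π.symm x) (π.symm y)

def relabelProfile {n : ℕ} (π : Equiv.Perm A) (R : Fin n → A → A → Prop) :
    Fin n → A → A → Prop :=
  fun i => relabel π (R i)

def Neutral {n : ℕ} (f : (Fin n → A → A → Prop) → Lottery A) : Prop :=
  ∀ R : Fin n → A → A → Prop, ValidProfile R →
    ∀ (π : Equiv.Perm A) (x : A), (f (relabelProfile π R)).1 (π x) = (f R).1 x

def Efficient {n : ℕ} (f : (Fin n → A → A → Prop) → Lottery A) : Prop :=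
  ∀ R : Fin n → A → A → Prop, ValidProfile R → SDEfficientAt R (f R)

def Strategyproof {n : ℕ} (f : (Fin n → A → A → Prop) → Lottery A) : Prop :=
  ¬ ∃ (R : Fin n → A → A → Prop) (i : Fin n) (r : A → A → Prop),
      ValidProfile R ∧ IsPref r ∧ SDGt (R i) (f (Function.update R i r)) (f R)


/-- A utility function `u` is consistent with the preference relation `r`. -/
def ConsistentUtil {A : Type*} (r : A → A → Prop) (u : A → ℝ) : Prop :=
  ∀ x y, u x ≥ u y ↔ r x y

/-- Expected utility of a lottery. -/
noncomputable def expUtil {A : Type*} [Fintype A] (u : A → ℝ) (p : Lottery A) : ℝ :=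
  ∑ x, p.1 x * u x

/-- A utility representation of a profile. -/
def UtilRep {A : Type*} {n : ℕ} (R : Fin n → A → A → Prop) (u : Fin n → A → ℝ) : Prop :=
  ∀ i, ConsistentUtil (R i) (u i)

/-- `q` u-dominates `p`. -/
def UDom {A : Type*} [Fintype A] {n : ℕ} (u : Fin n → A → ℝ) (q p : Lottery A) : Prop :=
  (∀ i, expUtil (u i) p ≤ expUtil (u i) q) ∧ ∃ i, expUtil (u i) p < expUtil (u i) q

section MyAux

open Finset

variable {A : Type*} [Fintype A]

private lemma key_const (d u : A → ℝ) (h0 : ∑ x, d x = 0)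
    (hc : ∀ x y : A, u x = u y) :
    (0 ≤ ∑ x, d x * u x) ∧
      (∀ z : A, 0 < (∑ x, if u z ≤ u x then d x else 0) → 0 < ∑ x, d x * u x) := by
  constructor
  · rcases isEmpty_or_nonempty A with h | h
    · simp
    · obtain ⟨a⟩ := h
      have : ∑ x, d x * u x = (∑ x, d x) * u a := by
        rw [Finset.sum_mul]
        exact Finset.sum_congr rfl fun x _ => by rw [hc x a]
      rw [this, h0, zero_mul]
  · intro z hz
    have heq : (∑ x, if u z ≤ u x then d x else 0) = ∑ x, d x :=
      Finset.sum_congr rfl fun x _ => if_pos (le_of_eq (hc z x))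
    rw [heq, h0] at hz
    exact absurd hz (lt_irrefl 0)

private lemma key_lemma (d : A → ℝ) (h0 : ∑ x, d x = 0) :
    ∀ (k : ℕ) (u : A → ℝ), (Finset.image u Finset.univ).card ≤ k →
      (∀ z, 0 ≤ ∑ x, if u z ≤ u x then d x else 0) →
      (0 ≤ ∑ x, d x * u x) ∧
      (∀ z, 0 < (∑ x, if u z ≤ u x then d x else 0) → 0 < ∑ x, d x * u x) := by
  intro k
  induction k with
  | zero =>
    intro u hcard _
    exact key_const d u h0 (fun x y => by
      have := Finset.card_le_one.mp (le_trans hcard (Nat.zero_le 1))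
      exact this (u x) (mem_image_of_mem u (mem_univ x)) (u y) (mem_image_of_mem u (mem_univ y)))
  | succ k ih =>
    intro u hcard hup
    by_cases hone : (Finset.image u Finset.univ).card ≤ 1
    · exact key_const d u h0 (fun x y =>
        Finset.card_le_one.mp hone (u x) (mem_image_of_mem u (mem_univ x))
          (u y) (mem_image_of_mem u (mem_univ y)))
    · have hS2 : 2 ≤ (Finset.image u Finset.univ).card := by omega
      set S := Finset.image u Finset.univ with hSdef
      have hSne : S.Nonempty := Finset.card_pos.mp (by omega)
      set t := S.min' hSne with htdef
      have htS : t ∈ S := S.min'_mem hSne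
      have hEne : (S.erase t).Nonempty := by
        rw [← Finset.card_pos, Finset.card_erase_of_mem htS]; omega
      set t' := (S.erase t).min' hEne with ht'def
      have ht'mem : t' ∈ S.erase t := (S.erase t).min'_mem hEne
      have ht'S : t' ∈ S := Finset.mem_of_mem_erase ht'mem
      have htt' : t < t' :=
        lt_of_le_of_ne (S.min'_le _ ht'S) (Ne.symm (Finset.ne_of_mem_erase ht'mem))
      have htle : ∀ x, t ≤ u x := fun x => S.min'_le _ (mem_image_of_mem u (mem_univ x))
      have hlow : ∀ x, u x = t ∨ t' ≤ u x := by
        intro x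
        by_cases h : u x = t
        · exact Or.inl h
        · exact Or.inr ((S.erase t).min'_le _
            (Finset.mem_erase.mpr ⟨h, mem_image_of_mem u (mem_univ x)⟩))
      set u' := fun x => max (u x) t' with hu'def
      have hu'eq : ∀ x, t' ≤ u x → u' x = u x := fun x h => max_eq_left h
      have hu'eq2 : ∀ x, u x = t → u' x = t' := fun x h => by
        simp only [hu'def]; rw [h]; exact max_eq_right (le_of_lt htt')
      have hu'ge : ∀ x, t' ≤ u' x := fun x => le_max_right _ _
      -- z0 realizing t'
      obtain ⟨z0, -, hz0⟩ := Finset.mem_image.mp ht'S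
      have hG : 0 ≤ ∑ x, (if t' ≤ u x then d x else 0) := by
        have := hup z0
        simpa only [hz0] using this
      -- decomposition
      have hpoint : ∀ x, d x * u x
          = d x * u' x + (t' - t) * ((if t' ≤ u x then d x else 0) - d x) := by
        intro x
        by_cases h : t' ≤ u x
        · rw [hu'eq x h, if_pos h]; ring
        · have hxt : u x = t := (hlow x).resolve_right h
          rw [hu'eq2 x hxt, if_neg h, hxt]; ring
      have hdecomp : ∑ x, d x * u x
          = (∑ x, d x * u' x) + (t' - t) * (∑ x, (if t' ≤ u x then d x else 0)) := by
        calc ∑ x, d x * u x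
            = ∑ x, (d x * u' x + (t' - t) * ((if t' ≤ u x then d x else 0) - d x)) :=
              Finset.sum_congr rfl fun x _ => hpoint x
          _ = (∑ x, d x * u' x)
              + (t' - t) * ((∑ x, (if t' ≤ u x then d x else 0)) - ∑ x, d x) := by
              rw [Finset.sum_add_distrib, ← Finset.mul_sum, Finset.sum_sub_distrib]
          _ = _ := by rw [h0, sub_zero]
      -- condition transfer for z with t' < u z
      have hcondgen : ∀ z, t' < u z → ∀ x, (u' z ≤ u' x ↔ u z ≤ u x) := by
        intro z hz x
        have hz' : u' z = u z := hu'eq z (le_of_lt hz)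
        rw [hz']
        by_cases h : t' ≤ u x
        · rw [hu'eq x h]
        · have hxt : u x = t := (hlow x).resolve_right h
          rw [hu'eq2 x hxt, hxt]
          constructor
          · intro hh; exact absurd hh (not_le.mpr hz)
          · intro hh; exact absurd hh (not_le.mpr (lt_trans htt' hz))
      have hup' : ∀ z, 0 ≤ ∑ x, if u' z ≤ u' x then d x else 0 := by
        intro z
        rcases le_or_gt (u z) t' with hz | hz
        · have hz' : u' z = t' := le_antisymm (max_le hz le_rfl) (hu'ge z)
          have : (∑ x, if u' z ≤ u' x then d x else 0) = ∑ x, d x :=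
            Finset.sum_congr rfl fun x _ => if_pos (hz' ▸ hu'ge x)
          rw [this, h0]
        · have : (∑ x, if u' z ≤ u' x then d x else 0)
              = ∑ x, if u z ≤ u x then d x else 0 :=
            Finset.sum_congr rfl fun x _ => if_congr (hcondgen z hz x) rfl rfl
          rw [this]; exact hup z
      have hsub : Finset.image u' Finset.univ ⊆ S.erase t := by
        intro s hs
        obtain ⟨x, -, rfl⟩ := Finset.mem_image.mp hs
        by_cases h : t' ≤ u x
        · rw [hu'eq x h]
          exact Finset.mem_erase.mpr ⟨ne_of_gt (lt_of_lt_of_le htt' h),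
            mem_image_of_mem u (mem_univ x)⟩
        · rw [hu'eq2 x ((hlow x).resolve_right h)]
          exact ht'mem
      have hcard' : (Finset.image u' Finset.univ).card ≤ k := by
        have h1 := Finset.card_le_card hsub
        rw [Finset.card_erase_of_mem htS] at h1
        omega
      obtain ⟨ihw, ihs⟩ := ih u' hcard' hup'
      have hmulnn : 0 ≤ (t' - t) * (∑ x, (if t' ≤ u x then d x else 0)) :=
        mul_nonneg (by linarith) hG
      constructor
      · rw [hdecomp]; linarith
      · intro z hz
        rcases hlow z with hzt | hzt'
        · have : (∑ x, if u z ≤ u x then d x else 0) = ∑ x, d x :=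
            Finset.sum_congr rfl fun x _ => if_pos (hzt ▸ htle x)
          rw [this, h0] at hz
          exact absurd hz (lt_irrefl 0)
        · rcases eq_or_lt_of_le hzt' with hzeq | hzlt
          · -- u z = t' : the strict term is the G-term
            have : (∑ x, if u z ≤ u x then d x else 0)
                = ∑ x, (if t' ≤ u x then d x else 0) :=
              Finset.sum_congr rfl fun x _ => by rw [← hzeq]
            rw [this] at hz
            rw [hdecomp]
            have : 0 < (t' - t) * (∑ x, (if t' ≤ u x then d x else 0)) :=
              mul_pos (by linarith) hz
            linarith
          · have : (∑ x, if u' z ≤ u' x then d x else 0)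
                = ∑ x, if u z ≤ u x then d x else 0 :=
              Finset.sum_congr rfl fun x _ => if_congr (hcondgen z hzlt x) rfl rfl
            have hstrict := ihs z (by rw [this]; exact hz)
            rw [hdecomp]; linarith

private lemma key_weak (d u : A → ℝ) (h0 : ∑ x, d x = 0)
    (hup : ∀ z, 0 ≤ ∑ x, if u z ≤ u x then d x else 0) :
    0 ≤ ∑ x, d x * u x :=
  (key_lemma d h0 _ u le_rfl hup).1

private lemma key_strict (d u : A → ℝ) (h0 : ∑ x, d x = 0)
    (hup : ∀ z, 0 ≤ ∑ x, if u z ≤ u x then d x else 0)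
    (z : A) (hz : 0 < ∑ x, if u z ≤ u x then d x else 0) :
    0 < ∑ x, d x * u x :=
  (key_lemma d h0 _ u le_rfl hup).2 z hz

/-- Sum of lottery differences over an upper set equals difference of upperSums. -/
private lemma sd_sum {r : A → A → Prop} {u : A → ℝ} (hu : ConsistentUtil r u)
    (p q : Lottery A) (z : A) :
    (∑ x, if u z ≤ u x then (q.1 x - p.1 x) else 0)
      = upperSum r q z - upperSum r p z := by
  unfold upperSum
  rw [← Finset.sum_sub_distrib]
  refine Finset.sum_congr rfl fun x _ => ?_
  rw [if_congr (hu x z) rfl rfl]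
  by_cases h : r x z <;> simp [h]

private lemma expUtil_sub (u : A → ℝ) (p q : Lottery A) :
    expUtil u q - expUtil u p = ∑ x, (q.1 x - p.1 x) * u x := by
  unfold expUtil
  rw [← Finset.sum_sub_distrib]
  exact Finset.sum_congr rfl fun x _ => (sub_mul _ _ _).symm

private lemma lot_diff_sum (p q : Lottery A) : ∑ x, (q.1 x - p.1 x) = 0 := by
  rw [Finset.sum_sub_distrib, q.2.2, p.2.2, sub_self]

private lemma sdge_exput {r : A → A → Prop} {u : A → ℝ} (hu : ConsistentUtil r u)
    {p q : Lottery A} (h : SDGe r q p) : expUtil u p ≤ expUtil u q := by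
  have hkey := key_weak (fun x => q.1 x - p.1 x) u (lot_diff_sum p q) (fun z => by
    rw [sd_sum hu p q z]
    have := h z
    linarith)
  rw [← expUtil_sub u p q] at hkey
  linarith

private lemma sdgt_exput {r : A → A → Prop} {u : A → ℝ} (hu : ConsistentUtil r u)
    {p q : Lottery A} (h : SDGt r q p) : expUtil u p < expUtil u q := by
  obtain ⟨hge, hngt⟩ := h
  have hex : ∃ z, upperSum r p z < upperSum r q z := by
    by_contra hc
    push_neg at hc
    exact hngt fun x => hc x
  obtain ⟨z, hz⟩ := hex
  have hkey := key_strict (fun x => q.1 x - p.1 x) u (lot_diff_sum p q)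
    (fun w => by rw [sd_sum hu p q w]; have := hge w; linarith)
    z (by rw [sd_sum hu p q z]; linarith)
  rw [← expUtil_sub u p q] at hkey
  linarith

/-- The canonical rank utility. -/
private noncomputable def baseUtil (r : A → A → Prop) : A → ℝ :=
  fun x => ((Finset.univ.filter (fun y => r x y)).card : ℝ)

private lemma baseUtil_consistent (r : A → A → Prop) (hr : IsPref r) :
    ConsistentUtil r (baseUtil r) := by
  have hrefl : ∀ x, r x x := fun x => (hr.1 x x).elim id id
  intro x y
  constructor
  · intro h
    by_contra hxy
    have hyx : r y x := (hr.1 x y).resolve_left hxy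
    have hss : (Finset.univ.filter (fun z => r x z)) ⊂ (Finset.univ.filter (fun z => r y z)) := by
      constructor
      · intro z hz
        simp only [Finset.mem_filter, Finset.mem_univ, true_and] at hz ⊢
        exact hr.2 y x z hyx hz
      · intro hsub
        have := hsub (Finset.mem_filter.mpr ⟨Finset.mem_univ y, hrefl y⟩)
        simp only [Finset.mem_filter, Finset.mem_univ, true_and] at this
        exact hxy this
    have := Finset.card_lt_card hss
    have h' : baseUtil r x < baseUtil r y := by
      unfold baseUtil; exact_mod_cast this
    exact absurd h (not_le.mpr h')
  · intro hxy
    have hsub : (Finset.univ.filter (fun z => r y z)) ⊆ (Finset.univ.filter (fun z => r x z)) := by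
      intro z hz
      simp only [Finset.mem_filter, Finset.mem_univ, true_and] at hz ⊢
      exact hr.2 x y z hxy hz
    have := Finset.card_le_card hsub
    unfold baseUtil
    exact_mod_cast this

private lemma baseUtil_nonneg (r : A → A → Prop) (x : A) : 0 ≤ baseUtil r x :=
  Nat.cast_nonneg _

private lemma baseUtil_le_card (r : A → A → Prop) (x : A) :
    baseUtil r x ≤ (Fintype.card A : ℝ) := by
  unfold baseUtil
  exact_mod_cast Finset.card_filter_le _ _

private lemma upperSum_sub {r : A → A → Prop} (p q : Lottery A) (z : A) :
    upperSum r p z - upperSum r q z = ∑ x, if r x z then (p.1 x - q.1 x) else 0 := by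
  unfold upperSum
  rw [← Finset.sum_sub_distrib]
  refine Finset.sum_congr rfl fun x _ => ?_
  by_cases h : r x z <;> simp [h]

/-- If q does not SD-dominate p weakly, some consistent utility strictly prefers p. -/
private lemma exists_util_flip (r : A → A → Prop) (hr : IsPref r) (p q : Lottery A)
    (h : ¬ SDGe r q p) :
    ∃ u : A → ℝ, ConsistentUtil r u ∧ expUtil u q < expUtil u p := by
  unfold SDGe at h
  push_neg at h
  obtain ⟨x0, hx0⟩ := h
  have hu0 := baseUtil_consistent r hr
  set u0 := baseUtil r with hu0def
  set c := upperSum r p x0 - upperSum r q x0 with hcdef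
  have hcpos : 0 < c := by simp only [hcdef]; linarith
  set D := ∑ x, (q.1 x - p.1 x) * u0 x with hDdef
  set M := max D 0 / c + ((Fintype.card A : ℝ) + 1) with hMdef
  have hMbig : ∀ x y : A, u0 y - u0 x < M := by
    intro x y
    have h1 := baseUtil_le_card r y
    have h2 := baseUtil_nonneg r x
    have h3 : 0 ≤ max D 0 / c := div_nonneg (le_max_right D 0) (le_of_lt hcpos)
    simp only [hMdef, hu0def]
    linarith
  have hMc : D < M * c := by
    have h1 : D / c ≤ max D 0 / c := (div_le_div_iff_of_pos_right hcpos).mpr (le_max_left D 0)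
    have h2 : D / c < M := by
      simp only [hMdef]
      have : (0:ℝ) < (Fintype.card A : ℝ) + 1 := by positivity
      linarith
    calc D = D / c * c := by field_simp
      _ < M * c := mul_lt_mul_of_pos_right h2 hcpos
  set u := fun x => u0 x + (if r x x0 then M else 0) with hudef
  have hcons : ConsistentUtil r u := by
    intro x y
    by_cases hx : r x x0 <;> by_cases hy : r y x0 <;>
      simp only [hudef, hx, hy, if_true, if_false, add_zero]
    · constructor
      · intro hh
        exact (hu0 x y).mp (by linarith [hh])
      · intro hh
        have := (hu0 x y).mpr hh
        simp only [ge_iff_le] at this ⊢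
        linarith
    · constructor
      · intro _
        rcases hr.1 x y with hxy | hyx
        · exact hxy
        · exact absurd (hr.2 y x x0 hyx hx) hy
      · intro _
        have := hMbig x y
        simp only [ge_iff_le]
        linarith
    · constructor
      · intro hh
        have := hMbig y x
        simp only [ge_iff_le] at hh
        exfalso; linarith
      · intro hxy
        exact absurd (hr.2 x y x0 hxy hy) hx
    · exact hu0 x y
  refine ⟨u, hcons, ?_⟩
  have hsplit : expUtil u p - expUtil u q
      = -D + M * c := by
    have h1 : expUtil u p - expUtil u q = ∑ x, (p.1 x - q.1 x) * u x := expUtil_sub u q p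
    have h2 : ∀ x, (p.1 x - q.1 x) * u x
        = (p.1 x - q.1 x) * u0 x + M * (if r x x0 then (p.1 x - q.1 x) else 0) := by
      intro x
      by_cases h : r x x0 <;> simp only [hudef, h, if_true, if_false] <;> ring
    rw [h1]
    calc ∑ x, (p.1 x - q.1 x) * u x
        = ∑ x, ((p.1 x - q.1 x) * u0 x + M * (if r x x0 then (p.1 x - q.1 x) else 0)) :=
          Finset.sum_congr rfl fun x _ => h2 x
      _ = (∑ x, (p.1 x - q.1 x) * u0 x)
          + M * (∑ x, if r x x0 then (p.1 x - q.1 x) else 0) := by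
          rw [Finset.sum_add_distrib, ← Finset.mul_sum]
      _ = -D + M * c := by
          rw [← upperSum_sub p q x0, ← hcdef]
          congr 1
          simp only [hDdef]
          rw [← Finset.sum_neg_distrib]
          exact Finset.sum_congr rfl fun x _ => by ring
  linarith

/-- Main equivalence. -/
private lemma main_iff {n : ℕ} (R : Fin n → A → A → Prop) (hR : ValidProfile R)
    (p : Lottery A) :
    SDEfficientAt R p ↔
      ¬ ∃ q : Lottery A, ∀ u : Fin n → A → ℝ, UtilRep R u → UDom u q p := by
  unfold SDEfficientAt
  apply not_congr
  constructor
  · rintro ⟨q, hge, i0, hgt⟩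
    refine ⟨q, fun u hu => ⟨fun i => sdge_exput (hu i) (hge i), i0, sdgt_exput (hu i0) hgt⟩⟩
  · rintro ⟨q, hq⟩
    have hge : ∀ i, SDGe (R i) q p := by
      intro i
      by_contra hni
      obtain ⟨ui, hui, hflip⟩ := exists_util_flip (R i) (hR i) p q hni
      set u : Fin n → A → ℝ := fun j => if h : j = i then ui else baseUtil (R j) with hudef
      have hrep : UtilRep R u := by
        intro j
        by_cases h : j = i
        · subst h; simpa [hudef] using hui
        · simpa [hudef, h] using baseUtil_consistent (R j) (hR j)
      have hd := (hq u hrep).1 i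
      have : u i = ui := by simp [hudef]
      rw [this] at hd
      linarith
    refine ⟨q, hge, ?_⟩
    by_contra hns
    push_neg at hns
    have hgeqp : ∀ i, SDGe (R i) p q := by
      intro i
      by_contra hni
      exact hns i ⟨hge i, hni⟩
    set u : Fin n → A → ℝ := fun j => baseUtil (R j) with hudef
    have hrep : UtilRep R u := fun j => baseUtil_consistent (R j) (hR j)
    obtain ⟨i, hi⟩ := (hq u hrep).2
    have := sdge_exput (hrep i) (hgeqp i)
    linarith

end MyAux

/-- A lottery is SD-efficient at `R` iff no lottery u-dominates it for all utility
representations; equivalently, an SDS never returns a lottery u-dominated for all utility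
representations iff its outcome is never SD-dominated. -/
theorem sd_efficient_iff_no_uDominating {A : Type*} [Fintype A] {n : ℕ}
    (R : Fin n → A → A → Prop) (hR : ValidProfile R) (p : Lottery A)
    (f : (Fin n → A → A → Prop) → Lottery A) :
    (SDEfficientAt R p ↔
      ¬ ∃ q : Lottery A, ∀ u : Fin n → A → ℝ, UtilRep R u → UDom u q p) ∧
    ((∀ R' : Fin n → A → A → Prop, ValidProfile R' →
        ¬ ∃ q : Lottery A, ∀ u : Fin n → A → ℝ, UtilRep R' u → UDom u q (f R')) ↔
      ∀ R' : Fin n → A → A → Prop, ValidProfile R' →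
        ¬ ∃ q : Lottery A, (∀ i, SDGe (R' i) q (f R')) ∧ ∃ i, SDGt (R' i) q (f R')) := by
  constructor
  · exact main_iff R hR p
  · exact forall₂_congr fun R' hR' => (main_iff R' hR' (f R')).symm

end
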